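/- Let m ≥ 1 and k ∈ {±1}^m with ∏_{j=1}^m k_j = 1. Then for every φ ∈ [0,2π), the matrices a^k(φ) and a^k(2π − φ) have the same characteristic polynomial, and hence the same spectrum. -/
import Mathlib


open Complex Matrix

/-- The symbol matrix `a^k(φ) ∈ ℂ^{m×m}` of an `m`-periodic tridiagonal sign operator:
superdiagonal entries `1`, subdiagonal entries `k₁,…,k_{m-1}` (here `k 0, …, k (m-2)`),
corner entries `k_m e^{iφ}` at position `(1,m)` and `e^{-iφ}` at position `(m,1)`.
The entries are defined as sums so that for small `m` overlapping positions add up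
(e.g. for `m = 1` the matrix is `(k₁ e^{iφ} + e^{-iφ})`). -/
noncomputable def symb (m : ℕ) (k : ℕ → ℂ) (φ : ℝ) : Matrix (Fin m) (Fin m) ℂ :=
  Matrix.of fun r c =>
    (if (c : ℕ) = (r : ℕ) + 1 then 1 else 0) +
    (if (r : ℕ) = (c : ℕ) + 1 then k c else 0) +
    (if (r : ℕ) = 0 ∧ (c : ℕ) = m - 1 then k c * Complex.exp (φ * Complex.I) else 0) +
    (if (r : ℕ) = m - 1 ∧ (c : ℕ) = 0 then Complex.exp (-φ * Complex.I) else 0)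

section Aux

open Polynomial

variable {n : Type*} [Fintype n] [DecidableEq n] {R : Type*} [CommRing R]

lemma charmatrix_transpose' (M : Matrix n n R) : charmatrix Mᵀ = (charmatrix M)ᵀ := by
  ext i j
  by_cases h : i = j
  · subst h; simp [charmatrix_apply]
  · simp [charmatrix_apply, Matrix.diagonal_apply_ne _ h,
      Matrix.diagonal_apply_ne _ (Ne.symm h), Matrix.transpose_apply]

lemma charpoly_transpose' (M : Matrix n n R) : Mᵀ.charpoly = M.charpoly := by
  rw [Matrix.charpoly, charmatrix_transpose', Matrix.det_transpose, Matrix.charpoly]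

lemma charpoly_conj' (D A : Matrix n n R) (hD : D * D = 1) :
    (D * A * D).charpoly = A.charpoly := by
  have hD' : (D.map C) * (D.map C) = 1 := by
    rw [← Matrix.map_mul, hD]
    exact Matrix.map_one _ (map_zero C) (map_one C)
  have key : charmatrix (D * A * D) = D.map C * charmatrix A * D.map C := by
    unfold charmatrix
    have h1 : ((C : R →+* R[X]).mapMatrix) (D * A * D)
        = D.map C * ((C : R →+* R[X]).mapMatrix A) * D.map C := by
      simp [RingHom.mapMatrix_apply, Matrix.map_mul]
    have h2 : D.map C * Matrix.scalar n (X : R[X]) * D.map C = Matrix.scalar n (X : R[X]) := by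
      rw [(Matrix.scalar_commute (X : R[X]) (fun r => mul_comm _ _) (D.map C)).symm.eq,
        mul_assoc, hD', mul_one]
    rw [h1, Matrix.mul_sub, Matrix.sub_mul, h2]
  rw [Matrix.charpoly, key, Matrix.det_mul, Matrix.det_mul, Matrix.charpoly]
  have hdet : (D.map C).det * (D.map C).det = 1 := by rw [← Matrix.det_mul, hD', Matrix.det_one]
  calc (D.map C).det * (charmatrix A).det * (D.map C).det
      = (D.map C).det * (D.map C).det * (charmatrix A).det := by ring
    _ = (charmatrix A).det := by rw [hdet, one_mul]

lemma mem_spectrum_iff_charpoly {m : ℕ} (M : Matrix (Fin m) (Fin m) ℂ) (μ : ℂ) :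
    μ ∈ spectrum ℂ M ↔ M.charpoly.eval μ = 0 := by
  rw [spectrum.mem_iff, Matrix.isUnit_iff_isUnit_det, isUnit_iff_ne_zero, not_not]
  have : (algebraMap ℂ (Matrix (Fin m) (Fin m) ℂ) μ - M).det = M.charpoly.eval μ := by
    rw [Matrix.charpoly, ← Polynomial.coe_evalRingHom, RingHom.map_det]
    congr 1
    ext i j
    by_cases h : i = j
    · subst h; simp [charmatrix_apply, Matrix.algebraMap_eq_diagonal]
    · simp [charmatrix_apply, Matrix.algebraMap_eq_diagonal, Matrix.diagonal_apply_ne _ h]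
  rw [this]

end Aux


/-- If `∏ⱼ kⱼ = 1`, then for every `φ ∈ [0,2π)` the matrices `a^k(φ)` and
`a^k(2π − φ)` have the same characteristic polynomial, hence the same spectrum. -/
theorem symb_charpoly_symm (m : ℕ) (hm : 1 ≤ m) (k : ℕ → ℂ)
    (hk : ∀ i < m, k i = 1 ∨ k i = -1)
    (hprod : ∏ j ∈ Finset.range m, k j = 1)
    (φ : ℝ) (hφ : φ ∈ Set.Ico (0 : ℝ) (2 * Real.pi)) :
    (symb m k φ).charpoly = (symb m k (2 * Real.pi - φ)).charpoly ∧
      spectrum ℂ (symb m k φ) = spectrum ℂ (symb m k (2 * Real.pi - φ)) := by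
  set d : ℕ → ℂ := fun i => ∏ j ∈ Finset.range i, k j with hd
  have hdsq : ∀ i, i ≤ m → d i * d i = 1 := by
    intro i hi
    rw [hd]
    rw [← Finset.prod_mul_distrib]
    apply Finset.prod_eq_one
    intro j hj
    rcases hk j (lt_of_lt_of_le (Finset.mem_range.mp hj) hi) with h | h <;> rw [h] <;> ring
  have hdsucc : ∀ i, d (i + 1) = d i * k i := fun i => Finset.prod_range_succ k i
  have hd0 : d 0 = 1 := Finset.prod_range_zero k
  have hp1 : d (m - 1) * k (m - 1) = 1 := by
    rw [← hdsucc, show m - 1 + 1 = m by omega]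
    exact hprod
  have hk2m : k (m - 1) * k (m - 1) = 1 := by
    rcases hk (m - 1) (by omega) with h | h <;> rw [h] <;> ring
  have hdm1 : d (m - 1) = k (m - 1) := by
    calc d (m - 1) = d (m - 1) * (k (m - 1) * k (m - 1)) := by rw [hk2m]; ring
      _ = (d (m - 1) * k (m - 1)) * k (m - 1) := by ring
      _ = k (m - 1) := by rw [hp1]; ring
  have hexp1 : Complex.exp (↑(2 * Real.pi - φ) * I) = Complex.exp (-↑φ * I) := by
    rw [show ((↑(2 * Real.pi - φ) : ℂ) * I) = 2 * ↑Real.pi * I + (-↑φ * I) by push_cast; ring,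
      Complex.exp_add, Complex.exp_two_pi_mul_I, one_mul]
  have hexp2 : Complex.exp (-↑(2 * Real.pi - φ) * I) = Complex.exp (↑φ * I) := by
    rw [show ((-↑(2 * Real.pi - φ) : ℂ) * I) = -(2 * ↑Real.pi * I) + ↑φ * I by push_cast; ring,
      Complex.exp_add, Complex.exp_neg, Complex.exp_two_pi_mul_I]
    norm_num
  set D : Matrix (Fin m) (Fin m) ℂ := Matrix.diagonal (fun i : Fin m => d i) with hD
  have hDD : D * D = 1 := by
    rw [hD, Matrix.diagonal_mul_diagonal,
      show (fun i : Fin m => d ↑i * d ↑i) = fun _ => (1 : ℂ) from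
        funext fun i => hdsq ↑i i.isLt.le,
      Matrix.diagonal_one]
  have hsim : D * (symb m k φ)ᵀ * D = symb m k (2 * Real.pi - φ) := by
    ext i j
    rw [Matrix.mul_diagonal, Matrix.diagonal_mul, Matrix.transpose_apply]
    simp only [symb, Matrix.of_apply]
    have e1 : d ↑i * (if (↑i : ℕ) = ↑j + 1 then (1 : ℂ) else 0) * d ↑j
        = (if (↑i : ℕ) = ↑j + 1 then k ↑j else 0) := by
      split_ifs with h
      · rw [mul_one, h, hdsucc]
        calc d ↑j * k ↑j * d ↑j = d ↑j * d ↑j * k ↑j := by ring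
          _ = k ↑j := by rw [hdsq ↑j j.isLt.le, one_mul]
      · ring
    have e2 : d ↑i * (if (↑j : ℕ) = ↑i + 1 then k ↑i else 0) * d ↑j
        = (if (↑j : ℕ) = ↑i + 1 then (1 : ℂ) else 0) := by
      split_ifs with h
      · have h1 : d (↑i + 1) * d (↑i + 1) = 1 := hdsq _ (by rw [← h]; exact j.isLt.le)
        rw [hdsucc] at h1
        rw [h, hdsucc]
        linear_combination h1
      · ring
    have e3 : d ↑i *
        (if (↑j : ℕ) = 0 ∧ (↑i : ℕ) = m - 1 then k ↑i * Complex.exp (↑φ * I) else 0) * d ↑j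
        = (if (↑i : ℕ) = m - 1 ∧ (↑j : ℕ) = 0 then
            Complex.exp (-↑(2 * Real.pi - φ) * I) else 0) := by
      by_cases h : (↑j : ℕ) = 0 ∧ (↑i : ℕ) = m - 1
      · rw [if_pos h, if_pos ⟨h.2, h.1⟩, h.1, h.2, hd0, hexp2]
        linear_combination Complex.exp (↑φ * I) * hp1
      · rw [if_neg h, if_neg (fun h' => h ⟨h'.2, h'.1⟩)]; ring
    have e4 : d ↑i *
        (if (↑j : ℕ) = m - 1 ∧ (↑i : ℕ) = 0 then Complex.exp (-↑φ * I) else 0) * d ↑j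
        = (if (↑i : ℕ) = 0 ∧ (↑j : ℕ) = m - 1 then
            k ↑j * Complex.exp (↑(2 * Real.pi - φ) * I) else 0) := by
      by_cases h : (↑j : ℕ) = m - 1 ∧ (↑i : ℕ) = 0
      · rw [if_pos h, if_pos ⟨h.2, h.1⟩, h.1, h.2, hd0, hdm1, hexp1]
        ring
      · rw [if_neg h, if_neg (fun h' => h ⟨h'.2, h'.1⟩)]; ring
    linear_combination e1 + e2 + e3 + e4
  constructor
  · rw [← hsim, charpoly_conj' D _ hDD, charpoly_transpose']
  · ext μ
    rw [mem_spectrum_iff_charpoly, mem_spectrum_iff_charpoly,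
      ← hsim, charpoly_conj' D _ hDD, charpoly_transpose']
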